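/- Suppose two families (φ_α) and (ψ_α), α ∈ ℕ^r with |α| ≤ N, are generalized moment sequences of rank r on a polynomial hypergroup, and φ_α(1) = ψ_α(1) for all |α| ≤ N. Then φ_α = ψ_α identically on ℕ. -/
import Mathlib


open Polynomial

noncomputable section

def pderiv' {r : ℕ} (i : Fin r) (f : (Fin r → ℝ) → ℂ) : (Fin r → ℝ) → ℂ :=
  fun x => deriv (fun t => f (Function.update x i t)) (x i)

/-- The mixed partial derivative `∂^α`. -/
def mpderiv {r : ℕ} (α : Fin r → ℕ) (f : (Fin r → ℝ) → ℂ) : (Fin r → ℝ) → ℂ :=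
  (List.finRange r).foldr (fun i g => (pderiv' i)^[α i] g) f

/-- Multi-index binomial coefficient. -/
def mchoose {r : ℕ} (α β : Fin r → ℕ) : ℕ := ∏ i, Nat.choose (α i) (β i)

theorem moment_sequence_unique
    (a b c : ℕ → ℝ) (P : ℕ → Polynomial ℝ) (lc : ℕ → ℕ → ℕ → ℝ)
    (ha0 : a 0 = 0) (hb0 : b 0 = 0)
    (hc : ∀ n, 0 < c n) (hb : ∀ n, 0 ≤ b n) (ha : ∀ n, 0 < a (n + 1))
    (hsum : ∀ n, a n + b n + c n = 1)
    (hP0 : P 0 = 1) (hP1 : P 1 = X)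
    (hrec : ∀ n, 1 ≤ n →
      X * P n = C (a n) * P (n - 1) + C (b n) * P n + C (c n) * P (n + 1))
    (hlin : ∀ m n, P m * P n =
      ∑ k ∈ Finset.Icc (Nat.dist m n) (m + n), C (lc m n k) * P k)
    (hnonneg : ∀ m n k, 0 ≤ lc m n k)
    (r N : ℕ) (hr : 0 < r)
    (φ ψ : (Fin r → ℕ) → ℕ → ℂ)
    (hφ0 : φ 0 0 = 1) (hψ0 : ψ 0 0 = 1)
    (hφ : ∀ α : Fin r → ℕ, (∑ i, α i) ≤ N → ∀ m n : ℕ,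
      ∑ k ∈ Finset.Icc (Nat.dist m n) (m + n), (lc m n k : ℂ) * φ α k =
        ∑ β ∈ Finset.Iic α, (mchoose α β : ℂ) * φ β m * φ (α - β) n)
    (hψ : ∀ α : Fin r → ℕ, (∑ i, α i) ≤ N → ∀ m n : ℕ,
      ∑ k ∈ Finset.Icc (Nat.dist m n) (m + n), (lc m n k : ℂ) * ψ α k =
        ∑ β ∈ Finset.Iic α, (mchoose α β : ℂ) * ψ β m * ψ (α - β) n)
    (hone : ∀ α : Fin r → ℕ, (∑ i, α i) ≤ N → φ α 1 = ψ α 1) :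
    ∀ α : Fin r → ℕ, (∑ i, α i) ≤ N → ∀ n : ℕ, φ α n = ψ α n := by
  -- Step 1: degree and leading coefficient of P n
  have hdeg : ∀ n : ℕ, (P n).natDegree ≤ n ∧ 0 < (P n).coeff n := by
    intro n
    induction n using Nat.strong_induction_on with
    | _ n ih =>
      rcases n with _ | _ | n
      · simp [hP0]
      · simp [hP1]
      · have hx := hrec (n+1) (by omega)
        simp only [Nat.add_sub_cancel] at hx
        rw [show n+1+1 = n+2 by omega] at hx
        have h0 := ih n (by omega)
        have h1 := ih (n+1) (by omega)
        have heq : C (c (n+1)) * P (n+2) =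
            X * P (n+1) - C (a (n+1)) * P n - C (b (n+1)) * P (n+1) := by
          linear_combination -hx
        have e1 : (X * P (n+1)).natDegree ≤ n + 2 := by
          refine le_trans natDegree_mul_le ?_
          have := h1.1
          simp only [natDegree_X]
          omega
        have e2 : (C (a (n+1)) * P n).natDegree ≤ n + 2 :=
          le_trans (natDegree_C_mul_le _ _) (le_trans h0.1 (by omega))
        have e3 : (C (b (n+1)) * P (n+1)).natDegree ≤ n + 2 :=
          le_trans (natDegree_C_mul_le _ _) (le_trans h1.1 (by omega))
        have hle : (C (c (n+1)) * P (n+2)).natDegree ≤ n + 2 := by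
          rw [heq]
          exact le_trans (natDegree_sub_le _ _)
            (max_le (le_trans (natDegree_sub_le _ _) (max_le e1 e2)) e3)
        have hcne : c (n+1) ≠ 0 := ne_of_gt (hc (n+1))
        rw [natDegree_C_mul hcne] at hle
        refine ⟨hle, ?_⟩
        have hco := congrArg (fun p => Polynomial.coeff p (n+2)) heq
        simp only [coeff_sub, coeff_C_mul, coeff_X_mul] at hco
        have z0 : (P n).coeff (n+2) = 0 :=
          coeff_eq_zero_of_natDegree_lt (by have := h0.1; omega)
        have z1 : (P (n+1)).coeff (n+2) = 0 :=
          coeff_eq_zero_of_natDegree_lt (by have := h1.1; omega)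
        rw [z0, z1, mul_zero, mul_zero, sub_zero, sub_zero] at hco
        have hx2 : (P (n+2)).coeff (n+2) = (P (n+1)).coeff (n+1) / c (n+1) := by
          rw [eq_div_iff hcne]
          linear_combination hco
        rw [hx2]
        exact div_pos h1.2 (hc (n+1))
  -- Step 2: identify lc 1 n (n+1) with c n
  have hlc : ∀ n : ℕ, 1 ≤ n → lc 1 n (n+1) = c n := by
    intro n hn
    have hl := hlin 1 n
    rw [hP1, hrec n hn] at hl
    have hco := congrArg (fun p => Polynomial.coeff p (n+1)) hl
    simp only [coeff_add, coeff_C_mul, finset_sum_coeff] at hco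
    have z1 : (P (n-1)).coeff (n+1) = 0 :=
      coeff_eq_zero_of_natDegree_lt (by have := (hdeg (n-1)).1; omega)
    have z2 : (P n).coeff (n+1) = 0 :=
      coeff_eq_zero_of_natDegree_lt (by have := (hdeg n).1; omega)
    rw [z1, z2, mul_zero, mul_zero, zero_add, zero_add] at hco
    have hs : (∑ k ∈ Finset.Icc (Nat.dist 1 n) (1+n), lc 1 n k * (P k).coeff (n+1)) =
        lc 1 n (n+1) * (P (n+1)).coeff (n+1) := by
      apply Finset.sum_eq_single
      · intro k hk hkne
        have hk' := (Finset.mem_Icc.mp hk).2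
        rw [coeff_eq_zero_of_natDegree_lt (by have := (hdeg k).1; omega), mul_zero]
      · intro hnot
        exfalso; apply hnot
        rw [Finset.mem_Icc]
        constructor
        · simp only [Nat.dist]; omega
        · omega
    rw [hs] at hco
    exact (mul_right_cancel₀ (ne_of_gt (hdeg (n+1)).2) hco).symm
  -- Step 3: lc 0 0 0 = 1
  have hlc0 : lc 0 0 0 = 1 := by
    have hl := hlin 0 0
    simp only [hP0, Nat.dist_self, Nat.add_zero, Finset.Icc_self, Finset.sum_singleton,
      mul_one, one_mul] at hl
    have : C (lc 0 0 0) = C (1 : ℝ) := by rw [map_one]; exact hl.symm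
    exact C_inj.mp this
  -- multi-index helpers
  have hmca : ∀ α : Fin r → ℕ, mchoose α α = 1 := by
    intro α; simp [mchoose]
  have hmc0 : ∀ α : Fin r → ℕ, mchoose α 0 = 1 := by
    intro α; simp [mchoose]
  have hsubself : ∀ α : Fin r → ℕ, α - α = 0 := by
    intro α; funext i; simp
  have hsub0 : ∀ α : Fin r → ℕ, α - 0 = α := by
    intro α; funext i; simp
  -- Step 4: base case n = 0, by induction on |α|
  have base : ∀ s : ℕ, ∀ α : Fin r → ℕ, (∑ i, α i) = s → (∑ i, α i) ≤ N → φ α 0 = ψ α 0 := by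
    intro s
    induction s using Nat.strong_induction_on with
    | _ s ihs =>
      intro α hs hα
      by_cases h0 : α = 0
      · subst h0; rw [hφ0, hψ0]
      · have eφ := hφ α hα 0 0
        have eψ := hψ α hα 0 0
        simp only [Nat.dist_self, Nat.add_zero, Finset.Icc_self, Finset.sum_singleton] at eφ eψ
        rw [hlc0] at eφ eψ
        simp only [Complex.ofReal_one, one_mul] at eφ eψ
        have hmemα : α ∈ Finset.Iic α := Finset.mem_Iic.mpr le_rfl
        have hmem0 : (0 : Fin r → ℕ) ∈ (Finset.Iic α).erase α := by
          refine Finset.mem_erase.mpr ⟨fun h => h0 h.symm, ?_⟩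
          exact Finset.mem_Iic.mpr (fun i => Nat.zero_le _)
        rw [← Finset.add_sum_erase _ _ hmemα, ← Finset.add_sum_erase _ _ hmem0] at eφ eψ
        simp only [hmca, hmc0, hsubself, hsub0, hφ0, Nat.cast_one, one_mul, mul_one] at eφ
        simp only [hmca, hmc0, hsubself, hsub0, hψ0, Nat.cast_one, one_mul, mul_one] at eψ
        have hM : (∑ β ∈ ((Finset.Iic α).erase α).erase 0,
              (mchoose α β : ℂ) * φ β 0 * φ (α - β) 0) =
            ∑ β ∈ ((Finset.Iic α).erase α).erase 0,
              (mchoose α β : ℂ) * ψ β 0 * ψ (α - β) 0 := by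
          refine Finset.sum_congr rfl fun β hβ => ?_
          have hβ0 : β ≠ 0 := (Finset.mem_erase.mp hβ).1
          have hβα : β ≠ α := (Finset.mem_erase.mp (Finset.mem_erase.mp hβ).2).1
          have hβle : β ≤ α := Finset.mem_Iic.mp (Finset.mem_erase.mp (Finset.mem_erase.mp hβ).2).2
          have hle : ∀ i, β i ≤ α i := fun i => hβle i
          have hex : ∃ i, β i < α i := by
            by_contra h; push_neg at h
            exact hβα (funext fun i => le_antisymm (hle i) (h i))
          have hlt : (∑ i, β i) < ∑ i, α i :=
            Finset.sum_lt_sum (fun i _ => hle i) ⟨hex.choose, Finset.mem_univ _, hex.choose_spec⟩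
          have hsplit : (∑ i, (α - β) i) + (∑ i, β i) = ∑ i, α i := by
            rw [← Finset.sum_add_distrib]
            exact Finset.sum_congr rfl fun i _ => Nat.sub_add_cancel (hle i)
          have hβpos : 0 < ∑ i, β i := by
            rcases Function.ne_iff.mp hβ0 with ⟨i, hi⟩
            have : 0 < β i := Nat.pos_of_ne_zero (by simpa using hi)
            calc 0 < β i := this
              _ ≤ ∑ i, β i := Finset.single_le_sum (fun i _ => Nat.zero_le _) (Finset.mem_univ i)
          rw [ihs (∑ i, β i) (by omega) β rfl (by omega),
            ihs (∑ i, (α - β) i) (by omega) (α - β) rfl (by omega)]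
        linear_combination eψ - eφ - hM
  -- Main induction
  suffices key : ∀ n : ℕ, ∀ α : Fin r → ℕ, (∑ i, α i) ≤ N → φ α n = ψ α n by
    intro α hα n; exact key n α hα
  intro n
  induction n using Nat.strong_induction_on with
  | _ n ih =>
    rcases n with _ | _ | n
    · exact fun α hα => base _ α rfl hα
    · exact fun α hα => hone α hα
    · intro α hα
      show φ α (n+2) = ψ α (n+2)
      have h1 := hφ α hα 1 (n+1)
      have h2 := hψ α hα 1 (n+1)
      have hd : Nat.dist 1 (n+1) = n := by simp only [Nat.dist]; omega
      have hicc : Finset.Icc (Nat.dist 1 (n+1)) (1 + (n+1)) = {n, n+1, n+2} := by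
        rw [hd]; ext x
        simp only [Finset.mem_Icc, Finset.mem_insert, Finset.mem_singleton]
        omega
      rw [hicc] at h1 h2
      have hsplit3 : ∀ g : ℕ → ℂ, ∑ k ∈ ({n, n+1, n+2} : Finset ℕ), g k
          = g n + g (n+1) + g (n+2) := by
        intro g
        rw [Finset.sum_insert (by simp only [Finset.mem_insert, Finset.mem_singleton]; omega),
          Finset.sum_insert (by simp only [Finset.mem_singleton]; omega),
          Finset.sum_singleton]
        ring
      rw [hsplit3] at h1 h2
      have en := ih n (by omega) α hα
      have en1 := ih (n+1) (by omega) α hα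
      have hR : (∑ β ∈ Finset.Iic α, (mchoose α β : ℂ) * φ β 1 * φ (α - β) (n+1)) =
          ∑ β ∈ Finset.Iic α, (mchoose α β : ℂ) * ψ β 1 * ψ (α - β) (n+1) := by
        refine Finset.sum_congr rfl fun β hβ => ?_
        have hβle : β ≤ α := Finset.mem_Iic.mp hβ
        have hb1 : (∑ i, β i) ≤ N :=
          le_trans (Finset.sum_le_sum fun i _ => hβle i) hα
        have hb2 : (∑ i, (α - β) i) ≤ N :=
          le_trans (Finset.sum_le_sum fun i _ => by simp [Nat.sub_le]) hα
        rw [hone β hb1, ih (n+1) (by omega) (α - β) hb2]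
      have hkey : (lc 1 (n+1) (n+2) : ℂ) * (φ α (n+2) - ψ α (n+2)) = 0 := by
        linear_combination h1 - h2 + hR - (lc 1 (n+1) n : ℂ) * en - (lc 1 (n+1) (n+1) : ℂ) * en1
      have hne : (lc 1 (n+1) (n+2) : ℂ) ≠ 0 := by
        rw [show n + 2 = (n+1) + 1 from rfl, hlc (n+1) (by omega)]
        exact_mod_cast ne_of_gt (hc (n+1))
      have := (mul_eq_zero.mp hkey).resolve_left hne
      exact sub_eq_zero.mp this

end
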